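/- arXiv:math/9804131 — 2 statements merged into one kernel-verified Lean document; each statement's English description precedes it below -/
import Mathlib

section
/- Assume q^{2l} = 1 where l ≥ 2 is the smallest positive integer with this property. Let A₊ be the unital ℂ-subalgebra of B generated by C, C'₂, X₊^l and (C−λX₀)^l, and let A₋ be the unital ℂ-subalgebra generated by C, C'₂, X₋^l and (C−λX₀)^l. Then A₊ ∩ A₋ equals the unital ℂ-subalgebra generated by C, C'₂ and (C−λX₀)^l. -/
noncomputable section

namespace SL2q

/-- The free algebra on the four generators X₀, X₊, X₋, C. -/
abbrev Free := FreeAlgebra ℂ (Fin 4)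

def gX0 : Free := FreeAlgebra.ι ℂ 0
def gXp : Free := FreeAlgebra.ι ℂ 1
def gXm : Free := FreeAlgebra.ι ℂ 2
def gC  : Free := FreeAlgebra.ι ℂ 3

/-- The defining relations of the algebra B of Lyubashenko–Sudbery. -/
inductive Rel (q : ℂ) : Free → Free → Prop
  | r1  : Rel q ((q ^ 2) • (gX0 * gXp) - gXp * gX0) (q • (gC * gXp))
  | r2  : Rel q ((q⁻¹ ^ 2) • (gX0 * gXm) - gXm * gX0) (-(q⁻¹ • (gC * gXm)))
  | r3  : Rel q (gXp * gXm - gXm * gXp)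
      ((q + q⁻¹) • ((gC - (q - q⁻¹) • gX0) * gX0))
  | rc0 : Rel q (gC * gX0) (gX0 * gC)
  | rcp : Rel q (gC * gXp) (gXp * gC)
  | rcm : Rel q (gC * gXm) (gXm * gC)

/-- The algebra B, presented by generators and relations. -/
abbrev B (q : ℂ) := RingQuot (Rel q)

def X0 (q : ℂ) : B q := RingQuot.mkAlgHom ℂ (Rel q) gX0
def Xp (q : ℂ) : B q := RingQuot.mkAlgHom ℂ (Rel q) gXp
def Xm (q : ℂ) : B q := RingQuot.mkAlgHom ℂ (Rel q) gXm
def Cc (q : ℂ) : B q := RingQuot.mkAlgHom ℂ (Rel q) gC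

/-- C'₂ = X₋X₊ + q⁻¹ C X₀ + q⁻² X₀². -/
def C2 (q : ℂ) : B q :=
  Xm q * Xp q + q⁻¹ • (Cc q * X0 q) + (q⁻¹ ^ 2) • (X0 q) ^ 2

/-! ### Auxiliary: a ℤ-grading on B, realized as a map into a Laurent-type algebra. -/

abbrev D (q : ℂ) := AddMonoidAlgebra (B q) ℤ

open AddMonoidAlgebra

def Φfun (q : ℂ) : Fin 4 → D q
  | 0 => single 0 (X0 q)
  | 1 => single 1 (Xp q)
  | 2 => single (-1) (Xm q)
  | 3 => single 0 (Cc q)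

def Φfree (q : ℂ) : Free →ₐ[ℂ] D q := FreeAlgebra.lift ℂ (Φfun q)

lemma Φfree_gX0 (q : ℂ) : Φfree q gX0 = single 0 (X0 q) := FreeAlgebra.lift_ι_apply _ _
lemma Φfree_gXp (q : ℂ) : Φfree q gXp = single 1 (Xp q) := FreeAlgebra.lift_ι_apply _ _
lemma Φfree_gXm (q : ℂ) : Φfree q gXm = single (-1) (Xm q) := FreeAlgebra.lift_ι_apply _ _
lemma Φfree_gC (q : ℂ) : Φfree q gC = single 0 (Cc q) := FreeAlgebra.lift_ι_apply _ _

lemma smulS (q c : ℂ) (a : ℤ) (b : B q) :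
    c • (single a b : D q) = single a (c • b) := AddMonoidAlgebra.smul_single c a b

lemma rel1 (q : ℂ) : (q ^ 2) • (X0 q * Xp q) - Xp q * X0 q = q • (Cc q * Xp q) := by
  simpa [X0, Xp, Cc, map_sub, map_smul, map_mul] using RingQuot.mkAlgHom_rel ℂ (Rel.r1 (q := q))

lemma rel2 (q : ℂ) :
    (q⁻¹ ^ 2) • (X0 q * Xm q) - Xm q * X0 q = -(q⁻¹ • (Cc q * Xm q)) := by
  simpa [X0, Xm, Cc, map_sub, map_smul, map_mul, map_neg] using
    RingQuot.mkAlgHom_rel ℂ (Rel.r2 (q := q))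

lemma rel3 (q : ℂ) :
    Xp q * Xm q - Xm q * Xp q
      = (q + q⁻¹) • ((Cc q - (q - q⁻¹) • X0 q) * X0 q) := by
  simpa [X0, Xp, Xm, Cc, map_sub, map_smul, map_mul] using
    RingQuot.mkAlgHom_rel ℂ (Rel.r3 (q := q))

lemma relc0 (q : ℂ) : Cc q * X0 q = X0 q * Cc q := by
  simpa [X0, Cc, map_mul] using RingQuot.mkAlgHom_rel ℂ (Rel.rc0 (q := q))
lemma relcp (q : ℂ) : Cc q * Xp q = Xp q * Cc q := by
  simpa [Xp, Cc, map_mul] using RingQuot.mkAlgHom_rel ℂ (Rel.rcp (q := q))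
lemma relcm (q : ℂ) : Cc q * Xm q = Xm q * Cc q := by
  simpa [Xm, Cc, map_mul] using RingQuot.mkAlgHom_rel ℂ (Rel.rcm (q := q))

lemma Φfree_rel (q : ℂ) : ∀ ⦃x y : Free⦄, Rel q x y → Φfree q x = Φfree q y := by
  intro x y h
  induction h with
  | r1 =>
      simp only [map_sub, map_smul, map_mul, Φfree_gX0, Φfree_gXp, Φfree_gC,
        single_mul_single, smulS, zero_add, add_zero]
      rw [← AddMonoidAlgebra.single_sub, rel1]
  | r2 =>
      simp only [map_sub, map_smul, map_mul, map_neg, Φfree_gX0, Φfree_gXm, Φfree_gC,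
        single_mul_single, smulS, zero_add, add_zero]
      rw [← AddMonoidAlgebra.single_sub, ← AddMonoidAlgebra.single_neg, rel2]
  | r3 =>
      simp only [map_sub, map_smul, map_mul, Φfree_gX0, Φfree_gXp, Φfree_gXm, Φfree_gC,
        single_mul_single, smulS, add_neg_cancel, neg_add_cancel, zero_add, add_zero]
      rw [← AddMonoidAlgebra.single_sub, ← AddMonoidAlgebra.single_sub, single_mul_single, zero_add, smulS, rel3]
  | rc0 =>
      simp only [map_mul, Φfree_gX0, Φfree_gC, single_mul_single, zero_add, add_zero, relc0]
  | rcp =>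
      simp only [map_mul, Φfree_gXp, Φfree_gC, single_mul_single, zero_add, add_zero, relcp]
  | rcm =>
      simp only [map_mul, Φfree_gXm, Φfree_gC, single_mul_single, zero_add, add_zero, relcm]

def Φ (q : ℂ) : B q →ₐ[ℂ] D q := RingQuot.liftAlgHom ℂ ⟨Φfree q, Φfree_rel q⟩

lemma Φ_X0 (q : ℂ) : Φ q (X0 q) = single 0 (X0 q) := by
  rw [X0, Φ, RingQuot.liftAlgHom_mkAlgHom_apply]; exact Φfree_gX0 q
lemma Φ_Xp (q : ℂ) : Φ q (Xp q) = single 1 (Xp q) := by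
  rw [Xp, Φ, RingQuot.liftAlgHom_mkAlgHom_apply]; exact Φfree_gXp q
lemma Φ_Xm (q : ℂ) : Φ q (Xm q) = single (-1) (Xm q) := by
  rw [Xm, Φ, RingQuot.liftAlgHom_mkAlgHom_apply]; exact Φfree_gXm q
lemma Φ_Cc (q : ℂ) : Φ q (Cc q) = single 0 (Cc q) := by
  rw [Cc, Φ, RingQuot.liftAlgHom_mkAlgHom_apply]; exact Φfree_gC q

/-- The evaluation (forget the degree) ring hom. -/
def evalRH (q : ℂ) : D q →+* B q :=
  AddMonoidAlgebra.liftNCRingHom (RingHom.id (B q)) 1 (fun _ _ => Commute.one_right _)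

lemma evalRH_single (q : ℂ) (a : ℤ) (b : B q) : evalRH q (single a b) = b := by
  show AddMonoidAlgebra.liftNC _ _ (single a b) = b
  rw [AddMonoidAlgebra.liftNC_single]
  simp

def evalA (q : ℂ) : D q →ₐ[ℂ] B q :=
  { evalRH q with
    commutes' := fun r => by
      simp only [AddMonoidAlgebra.coe_algebraMap, Function.comp_apply, RingHom.toMonoidHom_eq_coe,
        OneHom.toFun_eq_coe, MonoidHom.toOneHom_coe, MonoidHom.coe_coe]
      exact evalRH_single q 0 _ }

lemma evalA_single (q : ℂ) (a : ℤ) (b : B q) : evalA q (single a b) = b :=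
  evalRH_single q a b

lemma evalA_Φ (q : ℂ) (x : B q) : evalA q (Φ q x) = x := by
  have : (evalA q).comp ((Φ q).comp (RingQuot.mkAlgHom ℂ (Rel q)))
      = RingQuot.mkAlgHom ℂ (Rel q) := by
    apply FreeAlgebra.hom_ext
    funext i
    fin_cases i
    · exact (by rw [Φ_X0, evalA_single] : evalA q (Φ q (X0 q)) = X0 q)
    · exact (by rw [Φ_Xp, evalA_single] : evalA q (Φ q (Xp q)) = Xp q)
    · exact (by rw [Φ_Xm, evalA_single] : evalA q (Φ q (Xm q)) = Xm q)
    · exact (by rw [Φ_Cc, evalA_single] : evalA q (Φ q (Cc q)) = Cc q)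
  obtain ⟨y, rfl⟩ := RingQuot.mkAlgHom_surjective ℂ (Rel q) x
  exact congrArg (fun f => f y) this

/-- One-sided subalgebras of the graded algebra. -/
def gradeSub (q : ℂ) (A0 : Subalgebra ℂ (B q)) (P : ℤ → Prop)
    (hP0 : P 0) (hPadd : ∀ a b, P a → P b → P (a + b))
    (hPz : ∀ a b, P a → P b → a + b = 0 → a = 0 ∧ b = 0) : Subalgebra ℂ (D q) where
  carrier := {f | f.coeff 0 ∈ A0 ∧ ∀ n : ℤ, ¬ P n → f.coeff n = 0}
  add_mem' := by
    rintro f g ⟨hf0, hf⟩ ⟨hg0, hg⟩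
    exact ⟨by rw [AddMonoidAlgebra.coeff_add, Finsupp.add_apply]; exact add_mem hf0 hg0,
      fun n hn => by rw [AddMonoidAlgebra.coeff_add, Finsupp.add_apply, hf n hn, hg n hn, add_zero]⟩
  algebraMap_mem' := by
    intro r
    constructor
    · simp only [AddMonoidAlgebra.coe_algebraMap, Function.comp_apply]
      rw [AddMonoidAlgebra.coeff_single, Finsupp.single_apply]
      simp only [if_pos rfl]
      exact algebraMap_mem A0 r
    · intro n hn
      simp only [AddMonoidAlgebra.coe_algebraMap, Function.comp_apply]
      rw [AddMonoidAlgebra.coeff_single, Finsupp.single_apply, if_neg]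
      intro h; exact hn (h ▸ hP0)
  mul_mem' := by
    rintro f g ⟨hf0, hf⟩ ⟨hg0, hg⟩
    have hfP : ∀ a ∈ f.coeff.support, P a := fun a ha => by
      by_contra h; exact Finsupp.mem_support_iff.mp ha (hf a h)
    have hgP : ∀ a ∈ g.coeff.support, P a := fun a ha => by
      by_contra h; exact Finsupp.mem_support_iff.mp ha (hg a h)
    constructor
    · have : (f * g).coeff 0 = f.coeff 0 * g.coeff 0 := by
        rw [AddMonoidAlgebra.mul_apply]
        unfold Finsupp.sum
        rw [Finset.sum_eq_single 0]
        · dsimp only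
          rw [Finset.sum_eq_single 0]
          · simp
          · intro b hb hb0
            rw [if_neg]
            omega
          · intro h0
            have : g.coeff 0 = 0 := Finsupp.notMem_support_iff.mp h0
            simp [this]
        · intro a ha ha0
          apply Finset.sum_eq_zero
          intro b hb
          dsimp only
          rw [if_neg]
          intro hab
          exact ha0 (hPz a b (hfP a ha) (hgP b hb) hab).1
        · intro h0
          have : f.coeff 0 = 0 := Finsupp.notMem_support_iff.mp h0
          simp [this]
      rw [this]; exact mul_mem hf0 hg0
    · intro n hn
      rw [AddMonoidAlgebra.mul_apply]
      unfold Finsupp.sum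
      apply Finset.sum_eq_zero
      intro a ha
      apply Finset.sum_eq_zero
      intro b hb
      dsimp only
      rw [if_neg]
      intro hab
      exact hn (hab ▸ hPadd a b (hfP a ha) (hgP b hb))
  one_mem' := by
    constructor
    · rw [AddMonoidAlgebra.one_def, AddMonoidAlgebra.coeff_single, Finsupp.single_apply, if_pos rfl]
      exact one_mem _
    · intro n hn
      rw [AddMonoidAlgebra.one_def, AddMonoidAlgebra.coeff_single, Finsupp.single_apply, if_neg]
      intro h; exact hn (h ▸ hP0)

/-- at a root of unity (l ≥ 2 minimal with q^{2l} = 1), the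
intersection A₊ ∩ A₋ is the unital subalgebra generated by C, C'₂ and
(C−λX₀)^l. -/
theorem adjoin_inter (q : ℂ) (hq : q ≠ 0) (hq2 : q ^ 2 ≠ 1)
    (l : ℕ) (hl : 2 ≤ l) (hq2l : q ^ (2 * l) = 1)
    (hmin : ∀ m : ℕ, 0 < m → m < l → q ^ (2 * m) ≠ 1) :
    Algebra.adjoin ℂ {Cc q, C2 q, Xp q ^ l, (Cc q - (q - q⁻¹) • X0 q) ^ l}
      ⊓ Algebra.adjoin ℂ {Cc q, C2 q, Xm q ^ l, (Cc q - (q - q⁻¹) • X0 q) ^ l}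
      = Algebra.adjoin ℂ {Cc q, C2 q, (Cc q - (q - q⁻¹) • X0 q) ^ l} := by
  set A0 : Subalgebra ℂ (B q) :=
    Algebra.adjoin ℂ {Cc q, C2 q, (Cc q - (q - q⁻¹) • X0 q) ^ l} with hA0
  have hCc : Cc q ∈ A0 := Algebra.subset_adjoin (by simp)
  have hC2 : C2 q ∈ A0 := Algebra.subset_adjoin (by simp)
  have hPow : (Cc q - (q - q⁻¹) • X0 q) ^ l ∈ A0 := Algebra.subset_adjoin (by simp)
  -- images of the degree-0 generators
  have hΦC2 : Φ q (C2 q) = single 0 (C2 q) := by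
    simp only [C2, map_add, map_mul, map_smul, map_pow, Φ_X0, Φ_Xp, Φ_Xm, Φ_Cc,
      single_mul_single, smulS, AddMonoidAlgebra.single_pow, neg_add_cancel, add_zero,
      zero_add, smul_zero]
    rw [← AddMonoidAlgebra.single_add, ← AddMonoidAlgebra.single_add]
  have hΦY : Φ q (Cc q - (q - q⁻¹) • X0 q) = single 0 (Cc q - (q - q⁻¹) • X0 q) := by
    rw [map_sub, map_smul, Φ_X0, Φ_Cc, smulS, ← AddMonoidAlgebra.single_sub]
  have hΦYl : Φ q ((Cc q - (q - q⁻¹) • X0 q) ^ l)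
      = single 0 ((Cc q - (q - q⁻¹) • X0 q) ^ l) := by
    rw [map_pow, hΦY, AddMonoidAlgebra.single_pow, smul_zero]
  apply le_antisymm
  · -- the hard direction
    have Sp : Subalgebra ℂ (D q) := gradeSub q A0 (fun n => (0:ℤ) ≤ n) le_rfl
      (fun a b ha hb => by omega) (fun a b ha hb hab => by omega)
    have single_mem : ∀ (d : ℤ) (x : B q) (P : ℤ → Prop) hP0 hPadd hPz,
        (d = 0 → x ∈ A0) → (¬ P d → x = 0) →
        (single d x : D q) ∈ gradeSub q A0 P hP0 hPadd hPz := by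
      intro d x P hP0 hPadd hPz h0 hPd
      constructor
      · rw [AddMonoidAlgebra.coeff_single, Finsupp.single_apply]
        split
        · next h => exact h0 h
        · exact zero_mem _
      · intro n hn
        rw [AddMonoidAlgebra.coeff_single, Finsupp.single_apply]
        split
        · next h => subst h; exact hPd hn
        · rfl
    have hp : Algebra.adjoin ℂ {Cc q, C2 q, Xp q ^ l, (Cc q - (q - q⁻¹) • X0 q) ^ l}
        ≤ (gradeSub q A0 (fun n => (0:ℤ) ≤ n) le_rfl
            (fun a b ha hb => by omega) (fun a b ha hb hab => by omega)).comap (Φ q) := by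
      rw [Algebra.adjoin_le_iff]
      rintro x (rfl | rfl | rfl | rfl)
      · refine (Subalgebra.mem_comap _ _ _).mpr ?_
        rw [Φ_Cc]
        exact single_mem 0 _ _ _ _ _ (fun _ => hCc) (fun h => absurd le_rfl h)
      · refine (Subalgebra.mem_comap _ _ _).mpr ?_
        rw [hΦC2]
        exact single_mem 0 _ _ _ _ _ (fun _ => hC2) (fun h => absurd le_rfl h)
      · refine (Subalgebra.mem_comap _ _ _).mpr ?_
        rw [map_pow, Φ_Xp, AddMonoidAlgebra.single_pow]
        exact single_mem _ _ _ _ _ _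
          (fun h => absurd h (by rw [nsmul_eq_mul]; omega))
          (fun h => absurd (by rw [nsmul_eq_mul]; omega : (0:ℤ) ≤ l • (1:ℤ)) h)
      · refine (Subalgebra.mem_comap _ _ _).mpr ?_
        rw [hΦYl]
        exact single_mem 0 _ _ _ _ _ (fun _ => hPow) (fun h => absurd le_rfl h)
    have hm : Algebra.adjoin ℂ {Cc q, C2 q, Xm q ^ l, (Cc q - (q - q⁻¹) • X0 q) ^ l}
        ≤ (gradeSub q A0 (fun n => n ≤ (0:ℤ)) le_rfl
            (fun a b ha hb => by omega) (fun a b ha hb hab => by omega)).comap (Φ q) := by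
      rw [Algebra.adjoin_le_iff]
      rintro x (rfl | rfl | rfl | rfl)
      · refine (Subalgebra.mem_comap _ _ _).mpr ?_
        rw [Φ_Cc]
        exact single_mem 0 _ _ _ _ _ (fun _ => hCc) (fun h => absurd le_rfl h)
      · refine (Subalgebra.mem_comap _ _ _).mpr ?_
        rw [hΦC2]
        exact single_mem 0 _ _ _ _ _ (fun _ => hC2) (fun h => absurd le_rfl h)
      · refine (Subalgebra.mem_comap _ _ _).mpr ?_
        rw [map_pow, Φ_Xm, AddMonoidAlgebra.single_pow]
        exact single_mem _ _ _ _ _ _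
          (fun h => absurd h (by rw [nsmul_eq_mul]; omega))
          (fun h => absurd (by rw [nsmul_eq_mul]; omega : l • (-1:ℤ) ≤ 0) h)
      · refine (Subalgebra.mem_comap _ _ _).mpr ?_
        rw [hΦYl]
        exact single_mem 0 _ _ _ _ _ (fun _ => hPow) (fun h => absurd le_rfl h)
    rintro x ⟨hxp, hxm⟩
    obtain ⟨h10, h1n⟩ := hp hxp
    obtain ⟨h20, h2n⟩ := hm hxm
    have hsingle : Φ q x = single 0 ((Φ q x).coeff 0) := by
      ext n
      rcases eq_or_ne n 0 with rfl | hn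
      · rw [AddMonoidAlgebra.coeff_single, Finsupp.single_apply, if_pos rfl]
      · rw [AddMonoidAlgebra.coeff_single, Finsupp.single_apply, if_neg (Ne.symm hn)]
        rcases lt_or_gt_of_ne hn with h | h
        · exact h1n n (by omega)
        · exact h2n n (by omega)
    have := evalA_Φ q x
    rw [hsingle, evalA_single] at this
    rw [← this]
    exact h10
  · apply le_inf <;>
      exact Algebra.adjoin_mono (by intro x hx; simp only [Set.mem_insert_iff,
        Set.mem_singleton_iff] at hx ⊢; tauto)

end SL2q
end
end

section
/- Assume q^{2l} = 1 where l ≥ 3 is the smallest positive integer with this property. Let c, ν ∈ ℂ with ν ≠ 0 and (q²+1)c − (q^{2p}+1)ν ≠ 0 for every p = 1, …, l−1. Let V = ℂ^l with basis v₀, …, v_{l−1} and define: ρ_C v_p = c v_p; ρ₀ v_p = λ⁻¹ (c − q^{2p} ν) v_p; ρ₋ v_p = v_{p+1} for p < l−1 and ρ₋ v_{l−1} = 0; ρ₊ v₀ = 0 and ρ₊ v_p = λ⁻¹ [p] q^{p−2} ν ( (q²+1)c − (q^{2p}+1)ν ) v_{p−1} for 1 ≤ p ≤ l−1. Then (ρ₀,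 ρ₊, ρ₋, ρ_C) is an irreducible l-dimensional representation of B. -/
noncomputable section

namespace SL2q

/-- The q-number [p] = (q^p − q^{−p})/(q − q⁻¹). -/
def qNum (q : ℂ) (p : ℕ) : ℂ := (q ^ p - q⁻¹ ^ p) / (q - q⁻¹)

private lemma sum_ite_cast {l : ℕ} (f : Fin l → ℂ) (n : ℕ) :
    (∑ k : Fin l, if (k : ℕ) = n then f k else 0) = if h : n < l then f ⟨n, h⟩ else 0 := by
  split
  · next h =>
    rw [Finset.sum_eq_single (⟨n, h⟩ : Fin l)]
    · simp
    · intro b _ hb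
      have : (b : ℕ) ≠ n := fun hc => hb (Fin.ext hc)
      simp [this]
    · simp
  · next h =>
    apply Finset.sum_eq_zero
    intro k _
    have : (k : ℕ) ≠ n := by omega
    simp [this]

private lemma sum_ite_cast' {l : ℕ} (f : Fin l → ℂ) (n : ℕ) :
    (∑ k : Fin l, if n = (k : ℕ) then f k else 0) = if h : n < l then f ⟨n, h⟩ else 0 := by
  rw [← sum_ite_cast]
  congr 1; ext k; congr 1; exact propext eq_comm

private lemma sum_ite_succ {l : ℕ} (f : Fin l → ℂ) (n : ℕ) :
    (∑ k : Fin l, if n = (k : ℕ) + 1 then f k else 0)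
      = if h : n - 1 < l ∧ 1 ≤ n then f ⟨n - 1, h.1⟩ else 0 := by
  split
  · next h =>
    rw [Finset.sum_eq_single (⟨n - 1, h.1⟩ : Fin l)]
    · have : n = (n - 1) + 1 := by omega
      simp [← this]
    · intro b _ hb
      have hbn : (b : ℕ) ≠ n - 1 := fun hc => hb (Fin.ext hc)
      have : n ≠ (b : ℕ) + 1 := by omega
      simp [this]
    · simp
  · next h =>
    apply Finset.sum_eq_zero
    intro k _
    have hk : (k : ℕ) < l := k.2
    have : n ≠ (k : ℕ) + 1 := by omega
    simp [this]

set_option maxHeartbeats 1600000 in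
/-- the explicit l-dimensional highest- and lowest-weight
representation (l ≥ 3 minimal with q^{2l} = 1, ν ≠ 0,
(q²+1)c − (q^{2p}+1)ν ≠ 0 for p = 1,…,l−1), basis v₀,…,v_{l−1}:
ρ_C v_p = c v_p, ρ₀ v_p = λ⁻¹(c − q^{2p}ν) v_p, ρ₋ v_p = v_{p+1} (ρ₋ v_{l−1} = 0),
ρ₊ v₀ = 0, ρ₊ v_p = λ⁻¹[p]q^{p−2}ν((q²+1)c − (q^{2p}+1)ν) v_{p−1},
is an irreducible representation of B. -/
theorem hw_rep_dim_l (q : ℂ) (hq : q ≠ 0) (hq2 : q ^ 2 ≠ 1)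
    (l : ℕ) (hl : 3 ≤ l) (hq2l : q ^ (2 * l) = 1)
    (hmin : ∀ m : ℕ, 0 < m → m < l → q ^ (2 * m) ≠ 1)
    (c ν : ℂ) (hν : ν ≠ 0)
    (hreg : ∀ p : ℕ, 1 ≤ p → p < l → (q ^ 2 + 1) * c - (q ^ (2 * p) + 1) * ν ≠ 0) :
    let MC : Matrix (Fin l) (Fin l) ℂ := c • 1
    let M0 : Matrix (Fin l) (Fin l) ℂ :=
      Matrix.diagonal fun p => (q - q⁻¹)⁻¹ * (c - q ^ (2 * (p : ℕ)) * ν)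
    let Mm : Matrix (Fin l) (Fin l) ℂ :=
      Matrix.of fun i j => if (i : ℕ) = (j : ℕ) + 1 then 1 else 0
    let Mp : Matrix (Fin l) (Fin l) ℂ :=
      Matrix.of fun i j =>
        if (i : ℕ) + 1 = (j : ℕ) then
          (q - q⁻¹)⁻¹ * qNum q (j : ℕ) * (q ^ (j : ℕ) * q⁻¹ ^ 2) * ν *
            ((q ^ 2 + 1) * c - (q ^ (2 * (j : ℕ)) + 1) * ν)
        else 0
    (((q ^ 2 : ℂ) • (M0 * Mp) - Mp * M0 = q • (MC * Mp)) ∧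
     ((q⁻¹ ^ 2 : ℂ) • (M0 * Mm) - Mm * M0 = -(q⁻¹ • (MC * Mm))) ∧
     (Mp * Mm - Mm * Mp = ((q + q⁻¹) : ℂ) • ((MC - (q - q⁻¹) • M0) * M0)) ∧
     (MC * M0 = M0 * MC) ∧ (MC * Mp = Mp * MC) ∧ (MC * Mm = Mm * MC)) ∧
    Nontrivial (Fin l → ℂ) ∧
    (∀ W : Submodule ℂ (Fin l → ℂ),
      (∀ v ∈ W, M0.mulVec v ∈ W) → (∀ v ∈ W, Mp.mulVec v ∈ W) →
      (∀ v ∈ W, Mm.mulVec v ∈ W) → (∀ v ∈ W, MC.mulVec v ∈ W) →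
      W = ⊥ ∨ W = ⊤) := by
  intro MC M0 Mm Mp
  have hq1 : q ^ 2 - 1 ≠ 0 := sub_ne_zero.mpr hq2
  have hlam : q - q⁻¹ ≠ 0 := by
    have : q - q⁻¹ = (q ^ 2 - 1) / q := by field_simp
    rw [this]; exact div_ne_zero hq1 hq
  have hlaminv : (q - q⁻¹)⁻¹ = q * (q ^ 2 - 1)⁻¹ := by
    rw [show q - q⁻¹ = (q ^ 2 - 1) * q⁻¹ by field_simp, mul_inv, inv_inv, mul_comm]
  -- scalar abbreviations
  set C : ℕ → ℂ := fun m => (q - q⁻¹)⁻¹ * qNum q m * (q ^ m * q⁻¹ ^ 2) * ν *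
      ((q ^ 2 + 1) * c - (q ^ (2 * m) + 1) * ν) with hCdef
  set d : ℕ → ℂ := fun m => (q - q⁻¹)⁻¹ * (c - q ^ (2 * m) * ν) with hddef
  -- entry descriptions
  have hMp : ∀ i j : Fin l, Mp i j = if (i : ℕ) + 1 = (j : ℕ) then C (j : ℕ) else 0 :=
    fun i j => rfl
  have hMm : ∀ i j : Fin l, Mm i j = if (i : ℕ) = (j : ℕ) + 1 then 1 else 0 := fun i j => rfl
  have hM0 : M0 = Matrix.diagonal fun p : Fin l => d (p : ℕ) := rfl
  -- scalar identities
  have hd5 : ∀ m : ℕ, (q - q⁻¹) * d m = c - q ^ (2 * m) * ν := by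
    intro m
    simp only [hddef, ← mul_assoc, mul_inv_cancel₀ hlam, one_mul]
  have hkey1 : ∀ n : ℕ, q ^ 2 * d n - d (n + 1) = q * c := by
    intro n
    apply mul_left_cancel₀ hlam
    have h2 : q ^ (2 * (n + 1)) = q ^ (2 * n) * q ^ 2 := by rw [← pow_add]; ring_nf
    calc (q - q⁻¹) * (q ^ 2 * d n - d (n + 1))
        = q ^ 2 * ((q - q⁻¹) * d n) - (q - q⁻¹) * d (n + 1) := by ring
      _ = q ^ 2 * (c - q ^ (2 * n) * ν) - (c - q ^ (2 * n) * q ^ 2 * ν) := by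
          rw [hd5 n, hd5 (n + 1), h2]
      _ = (q - q⁻¹) * (q * c) := by field_simp; ring
  have hkey2 : ∀ n : ℕ, q⁻¹ ^ 2 * d (n + 1) - d n = -(q⁻¹ * c) := by
    intro n
    apply mul_left_cancel₀ hlam
    have h2 : q ^ (2 * (n + 1)) = q ^ (2 * n) * q ^ 2 := by rw [← pow_add]; ring_nf
    calc (q - q⁻¹) * (q⁻¹ ^ 2 * d (n + 1) - d n)
        = q⁻¹ ^ 2 * ((q - q⁻¹) * d (n + 1)) - (q - q⁻¹) * d n := by ring
      _ = q⁻¹ ^ 2 * (c - q ^ (2 * n) * q ^ 2 * ν) - (c - q ^ (2 * n) * ν) := by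
          rw [hd5 n, hd5 (n + 1), h2]
      _ = (q - q⁻¹) * (-(q⁻¹ * c)) := by field_simp; ring
  have hC' : ∀ m : ℕ, (q - q⁻¹) ^ 2 * q ^ 2 * C m
      = (q ^ (2 * m) - 1) * ν * ((q ^ 2 + 1) * c - (q ^ (2 * m) + 1) * ν) := by
    intro m
    have hx : q ^ m ≠ 0 := pow_ne_zero _ hq
    have h1 : q ^ (2 * m) = (q ^ m) ^ 2 := by rw [mul_comm, pow_mul]
    simp only [hCdef, qNum, h1, inv_pow, hlaminv, div_eq_mul_inv]
    generalize q ^ m = x at hx ⊢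
    field_simp
  have hC0 : C 0 = 0 := by simp [hCdef, qNum]
  have hCl : C l = 0 := by
    have h1 : q ^ l * q ^ l = 1 := by rw [← pow_add, show l + l = 2 * l by ring, hq2l]
    have h2 : q⁻¹ ^ l = q ^ l := by
      rw [inv_pow]; exact inv_eq_of_mul_eq_one_left h1
    simp only [hCdef, qNum, h2, sub_self, zero_div, mul_zero, zero_mul]
  have hkey3 : ∀ n : ℕ, C (n + 1) - C n = (q + q⁻¹) * ((c - (q - q⁻¹) * d n) * d n) := by
    intro n
    have hlam2 : (q - q⁻¹) ^ 2 * q ^ 2 ≠ 0 :=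
      mul_ne_zero (pow_ne_zero 2 hlam) (pow_ne_zero 2 hq)
    apply mul_left_cancel₀ hlam2
    rw [mul_sub, hC' (n + 1), hC' n]
    have h6 : (q - q⁻¹) * (q + q⁻¹) * q ^ 2 = q ^ 4 - 1 := by field_simp; ring
    have hR : (q - q⁻¹) ^ 2 * q ^ 2 * ((q + q⁻¹) * ((c - (q - q⁻¹) * d n) * d n))
        = (q ^ 4 - 1) * (q ^ (2 * n) * ν) * (c - q ^ (2 * n) * ν) := by
      calc (q - q⁻¹) ^ 2 * q ^ 2 * ((q + q⁻¹) * ((c - (q - q⁻¹) * d n) * d n))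
          = ((q - q⁻¹) * (q + q⁻¹) * q ^ 2) *
              ((c - (q - q⁻¹) * d n) * ((q - q⁻¹) * d n)) := by ring
        _ = (q ^ 4 - 1) * (q ^ (2 * n) * ν) * (c - q ^ (2 * n) * ν) := by
            rw [h6, hd5]; ring
    rw [hR]
    have h2 : q ^ (2 * (n + 1)) = q ^ (2 * n) * q ^ 2 := by rw [← pow_add]; ring_nf
    rw [h2]
    generalize q ^ (2 * n) = x
    ring
  have hCne : ∀ n : ℕ, 1 ≤ n → n < l → C n ≠ 0 := by
    intro n h1n hnl
    have hx : q ^ n ≠ 0 := pow_ne_zero _ hq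
    have hnum : q ^ n - q⁻¹ ^ n ≠ 0 := by
      intro h
      apply hmin n h1n hnl
      have : q ^ n = q⁻¹ ^ n := sub_eq_zero.mp h
      rw [inv_pow] at this
      calc q ^ (2 * n) = q ^ n * q ^ n := by rw [← pow_add]; ring_nf
        _ = q ^ n * (q ^ n)⁻¹ := by rw [← this]
        _ = 1 := mul_inv_cancel₀ hx
    refine mul_ne_zero (mul_ne_zero (mul_ne_zero (mul_ne_zero ?_ ?_) ?_) hν) (hreg n h1n hnl)
    · exact inv_ne_zero hlam
    · exact div_ne_zero hnum hlam
    · exact mul_ne_zero hx (pow_ne_zero 2 (inv_ne_zero hq))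
  -- MC facts
  have hMCl : ∀ A : Matrix (Fin l) (Fin l) ℂ, MC * A = c • A := by
    intro A; show (c • (1 : Matrix (Fin l) (Fin l) ℂ)) * A = c • A
    rw [Matrix.smul_mul, Matrix.one_mul]
  have hMCr : ∀ A : Matrix (Fin l) (Fin l) ℂ, A * MC = c • A := by
    intro A; show A * (c • (1 : Matrix (Fin l) (Fin l) ℂ)) = c • A
    rw [Matrix.mul_smul, Matrix.mul_one]
  -- products with Mm / Mp
  have hMpMm : Mp * Mm = Matrix.diagonal fun i : Fin l => C ((i : ℕ) + 1) := by
    ext i j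
    rw [Matrix.mul_apply]
    simp only [hMp, hMm, mul_ite, mul_one, mul_zero, ite_mul, zero_mul]
    rw [sum_ite_cast (fun k => if (i : ℕ) + 1 = (k : ℕ) then C (k : ℕ) else 0) ((j : ℕ) + 1),
      Matrix.diagonal_apply]
    have hi := i.2
    have hj := j.2
    split
    · next h =>
      by_cases hij : i = j
      · subst hij; simp
      · have : (i : ℕ) + 1 ≠ (j : ℕ) + 1 := by
          intro hc; exact hij (Fin.ext (by omega))
        simp [this, hij]
        exact fun hc => absurd (Fin.ext hc) hij
    · next h =>
      have hj1 : (j : ℕ) + 1 = l := by omega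
      by_cases hij : i = j
      · subst hij; simp [hj1, hCl]
      · simp [hij]
  have hMmMp : Mm * Mp = Matrix.diagonal fun i : Fin l => C (i : ℕ) := by
    ext i j
    rw [Matrix.mul_apply]
    simp only [hMp, hMm, ite_mul, one_mul, zero_mul]
    rw [sum_ite_succ (fun k => if (k : ℕ) + 1 = (j : ℕ) then C (j : ℕ) else 0) (i : ℕ),
      Matrix.diagonal_apply]
    have hi := i.2
    split
    · next h =>
      have hii : (i : ℕ) - 1 + 1 = (i : ℕ) := by omega
      rw [hii]
      by_cases hij : i = j
      · subst hij; simp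
      · have : (i : ℕ) ≠ (j : ℕ) := fun hc => hij (Fin.ext hc)
        simp [this, hij]
    · next h =>
      have hi0 : (i : ℕ) = 0 := by omega
      by_cases hij : i = j
      · subst hij; simp [hi0, hC0]
      · simp [hij]
  refine ⟨⟨?_, ?_, ?_, ?_, ?_, ?_⟩, ?_, ?_⟩
  -- relation 1
  · rw [hMCl]
    ext i j
    simp only [hM0, Matrix.sub_apply, Matrix.smul_apply, Matrix.diagonal_mul,
      Matrix.mul_diagonal, smul_eq_mul, hMp]
    by_cases hij : (i : ℕ) + 1 = (j : ℕ)
    · rw [if_pos hij]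
      have h2 : q ^ (2 * (j : ℕ)) = q ^ (2 * ((i : ℕ) + 1)) := by rw [hij]
      have hdj : d (j : ℕ) = d ((i : ℕ) + 1) := by rw [hij]
      rw [hdj]
      have hCj : C (j : ℕ) = C ((i : ℕ) + 1) := by rw [hij]
      rw [hCj]
      have := hkey1 (i : ℕ)
      linear_combination C ((i : ℕ) + 1) * this
    · rw [if_neg hij]; ring
  -- relation 2
  · rw [hMCl]
    ext i j
    simp only [hM0, Matrix.sub_apply, Matrix.smul_apply, Matrix.neg_apply, Matrix.diagonal_mul,
      Matrix.mul_diagonal, smul_eq_mul, hMm]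
    by_cases hij : (i : ℕ) = (j : ℕ) + 1
    · rw [if_pos hij]
      have hdi : d (i : ℕ) = d ((j : ℕ) + 1) := by rw [hij]
      rw [hdi]
      have := hkey2 (j : ℕ)
      linear_combination this
    · rw [if_neg hij]; ring
  -- relation 3
  · rw [hMpMm, hMmMp]
    have hstep : (MC - (q - q⁻¹) • M0) * M0
        = Matrix.diagonal fun i : Fin l => (c - (q - q⁻¹) * d (i : ℕ)) * d (i : ℕ) := by
      have : MC - (q - q⁻¹) • M0 = Matrix.diagonal fun i : Fin l => c - (q - q⁻¹) * d (i : ℕ) := by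
        ext i j
        simp only [Matrix.sub_apply, Matrix.smul_apply, hM0, Matrix.diagonal_apply, smul_eq_mul]
        show (c • (1 : Matrix (Fin l) (Fin l) ℂ)) i j - _ = _
        by_cases hij : i = j
        · subst hij; simp [Matrix.one_apply]
        · simp [Matrix.one_apply, hij]
      rw [this, hM0, Matrix.diagonal_mul_diagonal]
    rw [hstep]
    ext i j
    simp only [Matrix.sub_apply, Matrix.smul_apply, Matrix.diagonal_apply, smul_eq_mul]
    by_cases hij : i = j
    · subst hij; simp only [if_pos rfl]; exact hkey3 (i : ℕ)
    · simp [hij]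
  -- commutation with MC
  · rw [hMCl, hMCr]
  · rw [hMCl, hMCr]
  · rw [hMCl, hMCr]
  -- nontrivial
  · haveI : NeZero l := ⟨by omega⟩
    infer_instance
  -- irreducibility
  · intro W hW0 hWp hWm hWC
    by_cases hbot : W = ⊥
    · exact Or.inl hbot
    right
    -- get a nonzero vector
    obtain ⟨v, hvW, hv0⟩ : ∃ v ∈ W, v ≠ 0 := by
      by_contra h
      push_neg at h
      exact hbot (by
        ext x
        simp only [Submodule.mem_bot]
        exact ⟨fun hx => h x hx, fun hx => hx ▸ W.zero_mem⟩)
    -- mulVec formulas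
    have hMmV : ∀ (u : Fin l → ℂ) (i : Fin l), Mm.mulVec u i
        = if h : (i : ℕ) - 1 < l ∧ 1 ≤ (i : ℕ) then u ⟨(i : ℕ) - 1, h.1⟩ else 0 := by
      intro u i
      rw [Matrix.mulVec, dotProduct]
      simp only [hMm, ite_mul, one_mul, zero_mul]
      exact sum_ite_succ (fun k => u k) (i : ℕ)
    have hsingleV : ∀ (A : Matrix (Fin l) (Fin l) ℂ) (a : Fin l) (i : Fin l),
        A.mulVec (Pi.single a 1) i = A i a := by
      intro A a i
      rw [Matrix.mulVec, dotProduct]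
      simp [Pi.single_apply, mul_ite]
    -- least support index
    classical
    have hex : ∃ n : ℕ, ∃ i : Fin l, (i : ℕ) = n ∧ v i ≠ 0 := by
      have : ∃ i : Fin l, v i ≠ 0 := Function.ne_iff.mp hv0
      obtain ⟨i, hi⟩ := this
      exact ⟨(i : ℕ), i, rfl, hi⟩
    obtain ⟨p, ⟨ip, hip, hvip⟩, hpmin⟩ : ∃ p : ℕ, (∃ i : Fin l, (i : ℕ) = p ∧ v i ≠ 0) ∧
        ∀ i : Fin l, (i : ℕ) < p → v i = 0 := by
      refine ⟨Nat.find hex, Nat.find_spec hex, fun i hi => ?_⟩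
      by_contra h
      exact Nat.find_min hex hi ⟨i, rfl, h⟩
    have hpl : p < l := by have h2 := ip.2; omega
    -- iterate Mm
    have key : ∀ t : ℕ, ∃ w ∈ W, ∀ i : Fin l,
        w i = if h : t ≤ (i : ℕ) then v ⟨(i : ℕ) - t, by omega⟩ else 0 := by
      intro t
      induction t with
      | zero =>
        refine ⟨v, hvW, fun i => ?_⟩
        rw [dif_pos (Nat.zero_le _)]
        refine (congrArg v (Fin.ext ?_)).symm
        show (i : ℕ) - 0 = (i : ℕ)
        omega
      | succ t ih =>
        obtain ⟨w, hwW, hw⟩ := ih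
        refine ⟨Mm.mulVec w, hWm w hwW, fun i => ?_⟩
        rw [hMmV]
        by_cases h1 : 1 ≤ (i : ℕ)
        · rw [dif_pos ⟨by omega, h1⟩, hw]
          by_cases h2 : t + 1 ≤ (i : ℕ)
          · rw [dif_pos (by omega : t ≤ (i : ℕ) - 1), dif_pos h2]
            refine congrArg v (Fin.ext ?_)
            show (i : ℕ) - 1 - t = (i : ℕ) - (t + 1)
            omega
          · rw [dif_neg (show ¬ t ≤ (i : ℕ) - 1 by omega), dif_neg (show ¬ t + 1 ≤ (i : ℕ) by omega)]
        · rw [dif_neg (show ¬((i : ℕ) - 1 < l ∧ 1 ≤ (i : ℕ)) by omega), dif_neg (show ¬ t + 1 ≤ (i : ℕ) by omega)]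
    -- top basis vector
    have hlast : Pi.single (⟨l - 1, by omega⟩ : Fin l) (1 : ℂ) ∈ W := by
      obtain ⟨w, hwW, hw⟩ := key (l - 1 - p)
      have hweq : w = (v ip) • (Pi.single (⟨l - 1, by omega⟩ : Fin l) (1 : ℂ) : Fin l → ℂ) := by
        funext i
        rw [hw]
        by_cases hi : (i : ℕ) = l - 1
        · have ht : l - 1 - p ≤ (i : ℕ) := by omega
          rw [dif_pos ht]
          have : (⟨(i : ℕ) - (l - 1 - p), by omega⟩ : Fin l) = ip := Fin.ext (by simp; omega)
          rw [this]
          have : i = (⟨l - 1, by omega⟩ : Fin l) := Fin.ext (by simpa using hi)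
          rw [this]
          simp [Pi.single_apply]
        · have hine : i ≠ (⟨l - 1, by omega⟩ : Fin l) := fun hc => hi (by rw [hc])
          rw [Pi.smul_apply, Pi.single_apply, if_neg hine, smul_zero]
          by_cases ht : l - 1 - p ≤ (i : ℕ)
          · rw [dif_pos ht]
            exact hpmin _ (show (i : ℕ) - (l - 1 - p) < p by have := i.2; omega)
          · rw [dif_neg ht]
      have : (v ip)⁻¹ • w ∈ W := W.smul_mem _ hwW
      rwa [hweq, smul_smul, inv_mul_cancel₀ hvip, one_smul] at this
    -- descend with Mp
    have hdesc : ∀ t : ℕ, t < l → Pi.single (⟨l - 1 - t, by omega⟩ : Fin l) (1 : ℂ) ∈ W := by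
      intro t
      induction t with
      | zero => intro _; simpa using hlast
      | succ t ih =>
        intro htl
        have hprev := ih (by omega)
        set n : ℕ := l - 1 - t with hn
        have h1n : 1 ≤ n := by omega
        have hnl : n < l := by omega
        have happ := hWp _ hprev
        have heq : Mp.mulVec (Pi.single (⟨l - 1 - t, by omega⟩ : Fin l) (1 : ℂ))
            = (C n) • (Pi.single (⟨l - 1 - (t + 1), by omega⟩ : Fin l) (1 : ℂ) : Fin l → ℂ) := by
          funext i
          rw [hsingleV]
          rw [hMp]
          simp only [Pi.smul_apply, Pi.single_apply, smul_eq_mul]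
          by_cases hi : (i : ℕ) + 1 = n
          · rw [if_pos (by simpa using hi)]
            have : i = (⟨l - 1 - (t + 1), by omega⟩ : Fin l) := Fin.ext (by simp; omega)
            rw [if_pos this]
            simp only [mul_one]
            exact congrArg C hn.symm
          · rw [if_neg (by simpa using hi)]
            have : i ≠ (⟨l - 1 - (t + 1), by omega⟩ : Fin l) := by
              intro hc
              apply hi
              rw [hc]
              simp; omega
            rw [if_neg this, mul_zero]
        rw [heq] at happ
        have := W.smul_mem (C n)⁻¹ happ
        rwa [smul_smul, inv_mul_cancel₀ (hCne n h1n hnl), one_smul] at this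
    -- all basis vectors
    have hbasis : ∀ a : Fin l, Pi.single a (1 : ℂ) ∈ W := by
      intro a
      have h := hdesc (l - 1 - (a : ℕ)) (by have := a.2; omega)
      have : (⟨l - 1 - (l - 1 - (a : ℕ)), by omega⟩ : Fin l) = a := Fin.ext (by
        simp
        have := a.2
        omega)
      rwa [this] at h
    -- conclude
    rw [eq_top_iff]
    intro u _
    have hu : u = ∑ a : Fin l, u a • (Pi.single a (1 : ℂ) : Fin l → ℂ) := by
      funext i
      rw [Finset.sum_apply]
      simp [Pi.single_apply, mul_ite]
    rw [hu]
    exact Submodule.sum_mem W fun a _ => W.smul_mem _ (hbasis a)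

end SL2q
end
end
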